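/- Let E be a reflexive Banach space with a 1-unconditional normalized basis (e_γ)_{γ∈Γ} and let (X_γ)_{γ∈Γ} be Banach spaces. Then the E-direct sum (⊕_{γ∈Γ} X_γ)_E is a Grothendieck space if and only if each X_γ is a Grothendieck space. -/

import Mathlib

open Filter Topology ZeroAtInfty

/-- A sequence in the dual of `X` converges in the weak* topology. -/
def WeakStarConv (X : Type*) [SeminormedAddCommGroup X] [NormedSpace ℝ X]
    (f : ℕ → X →L[ℝ] ℝ) (g : X →L[ℝ] ℝ) : Prop :=
  ∀ x : X, Tendsto (fun n => f n x) atTop (𝓝 (g x))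

/-- A sequence in a normed space `Z` converges in the weak topology. -/
def WeakConv (Z : Type*) [SeminormedAddCommGroup Z] [NormedSpace ℝ Z]
    (f : ℕ → Z) (g : Z) : Prop :=
  ∀ φ : Z →L[ℝ] ℝ, Tendsto (fun n => φ (f n)) atTop (𝓝 (φ g))

/-- A Banach space is Grothendieck if weak*-convergent sequences in its dual converge weakly. -/
def IsGrothendieck (X : Type*) [SeminormedAddCommGroup X] [NormedSpace ℝ X] : Prop :=
  ∀ (f : ℕ → X →L[ℝ] ℝ) (g : X →L[ℝ] ℝ),
    WeakStarConv X f g → WeakConv (X →L[ℝ] ℝ) f g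

/-- The weak topology of a normed space. -/
def weakTopology (Y : Type*) [SeminormedAddCommGroup Y] [NormedSpace ℝ Y] :
    TopologicalSpace Y :=
  TopologicalSpace.induced (fun (y : Y) => fun f : Y →L[ℝ] ℝ => f y) Pi.topologicalSpace

/-- An operator is weakly compact if the image of the closed unit ball is
relatively compact in the weak topology. -/
def IsWeaklyCompactOp {X Y : Type*} [SeminormedAddCommGroup X] [NormedSpace ℝ X]
    [SeminormedAddCommGroup Y] [NormedSpace ℝ Y] (T : X →L[ℝ] Y) : Prop :=
  @IsCompact Y (weakTopology Y) (@closure Y (weakTopology Y) (⇑T '' Metric.closedBall 0 1))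


open Filter Topology NormedSpace

namespace GrothAux
open scoped Classical
set_option linter.unusedSectionVars false

variable {Γ : Type*} {E : Type*} [NormedAddCommGroup E] [NormedSpace ℝ E]
  {e : Γ → E}

section Flips

variable (hunc : ∀ (a ε : Γ → ℝ) (v w : E), (∀ γ, |ε γ| = 1) →
    HasSum (fun γ => a γ • e γ) v → HasSum (fun γ => (ε γ * a γ) • e γ) w → ‖w‖ = ‖v‖)

include hunc

/-- Partial sums with finitely many signs flipped have the same norm. -/
theorem norm_flip_sum (a ε : Γ → ℝ) (F : Finset Γ) (hε : ∀ γ ∈ F, |ε γ| = 1) :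
    ‖∑ γ ∈ F, (ε γ * a γ) • e γ‖ = ‖∑ γ ∈ F, a γ • e γ‖ := by
  classical
  have hv : HasSum (fun γ => (if γ ∈ F then a γ else 0) • e γ) (∑ γ ∈ F, a γ • e γ) := by
    have h0 : ∀ γ ∉ F, (if γ ∈ F then a γ else 0) • e γ = 0 := by
      intro γ hγ; simp [hγ]
    have h := hasSum_sum_of_ne_finset_zero (L := SummationFilter.unconditional _) h0
    have : ∑ γ ∈ F, (if γ ∈ F then a γ else 0) • e γ = ∑ γ ∈ F, a γ • e γ :=
      Finset.sum_congr rfl fun γ hγ => by simp [hγ]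
    rwa [this] at h
  have hw : HasSum (fun γ => ((if γ ∈ F then ε γ else 1) * (if γ ∈ F then a γ else 0)) • e γ)
      (∑ γ ∈ F, (ε γ * a γ) • e γ) := by
    have h0 : ∀ γ ∉ F, ((if γ ∈ F then ε γ else 1) * (if γ ∈ F then a γ else 0)) • e γ = 0 := by
      intro γ hγ; simp [hγ]
    have h := hasSum_sum_of_ne_finset_zero (L := SummationFilter.unconditional _) h0
    have : ∑ γ ∈ F, ((if γ ∈ F then ε γ else 1) * (if γ ∈ F then a γ else 0)) • e γ
        = ∑ γ ∈ F, (ε γ * a γ) • e γ :=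
      Finset.sum_congr rfl fun γ hγ => by simp [hγ]
    rwa [this] at h
  exact hunc _ _ _ _
    (fun γ => by by_cases hγ : γ ∈ F <;> simp [hγ, hε]) hv hw

/-- Flipping the signs of all coefficients outside a finite set. -/
theorem norm_two_smul_sub (a : Γ → ℝ) {v : E} (hv : HasSum (fun γ => a γ • e γ) v)
    (F : Finset Γ) : ‖(2 : ℝ) • (∑ γ ∈ F, a γ • e γ) - v‖ = ‖v‖ := by
  classical
  set s := ∑ γ ∈ F, a γ • e γ with hs
  have hsingle : HasSum (fun γ => if γ ∈ F then (2 * a γ) • e γ else 0) ((2 : ℝ) • s) := by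
    have h0 : ∀ γ ∉ F, (if γ ∈ F then (2 * a γ) • e γ else 0) = 0 := by
      intro γ hγ; simp [hγ]
    have h := hasSum_sum_of_ne_finset_zero (L := SummationFilter.unconditional _) h0
    have : ∑ γ ∈ F, (if γ ∈ F then (2 * a γ) • e γ else 0) = (2 : ℝ) • s := by
      rw [hs, Finset.smul_sum]
      exact Finset.sum_congr rfl fun γ hγ => by simp [hγ, mul_smul]
    rwa [this] at h
  have hw : HasSum (fun γ => ((if γ ∈ F then (1 : ℝ) else -1) * a γ) • e γ)
      ((2 : ℝ) • s - v) := by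
    have h := hsingle.sub hv
    have : (fun γ => (if γ ∈ F then (2 * a γ) • e γ else 0) - a γ • e γ)
        = fun γ => ((if γ ∈ F then (1 : ℝ) else -1) * a γ) • e γ := by
      funext γ
      by_cases hγ : γ ∈ F
      · simp only [hγ, if_true, one_mul]
        rw [show (2 : ℝ) * a γ = a γ + a γ by ring, add_smul]
        abel
      · simp only [hγ, if_false]
        rw [show (-1 : ℝ) * a γ = -(a γ) by ring, neg_smul]
        abel
    rwa [this] at h
  exact hunc a _ v _ (fun γ => by by_cases hγ : γ ∈ F <;> simp [hγ]) hv hw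

theorem norm_partial_le (a : Γ → ℝ) {v : E} (hv : HasSum (fun γ => a γ • e γ) v)
    (F : Finset Γ) : ‖∑ γ ∈ F, a γ • e γ‖ ≤ ‖v‖ := by
  set s := ∑ γ ∈ F, a γ • e γ with hs
  have h := norm_two_smul_sub hunc a hv F
  have hrep : s = (2⁻¹ : ℝ) • (v + ((2 : ℝ) • s - v)) := by
    rw [show v + ((2 : ℝ) • s - v) = (2 : ℝ) • s by abel, smul_smul]
    norm_num
  calc ‖s‖ = ‖(2⁻¹ : ℝ) • (v + ((2 : ℝ) • s - v))‖ := by rw [← hrep]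
    _ ≤ 2⁻¹ * (‖v‖ + ‖(2 : ℝ) • s - v‖) := by
        rw [norm_smul]
        have := norm_add_le v ((2 : ℝ) • s - v)
        have h2 : ‖(2⁻¹ : ℝ)‖ = 2⁻¹ := by rw [Real.norm_eq_abs]; norm_num
        rw [h2]
        nlinarith [norm_nonneg ((2:ℝ) • s - v), norm_nonneg v]
    _ ≤ ‖v‖ := by rw [h]; linarith

theorem norm_sub_partial_le (a : Γ → ℝ) {v : E} (hv : HasSum (fun γ => a γ • e γ) v)
    (F : Finset Γ) : ‖v - ∑ γ ∈ F, a γ • e γ‖ ≤ ‖v‖ := by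
  set s := ∑ γ ∈ F, a γ • e γ with hs
  have h := norm_two_smul_sub hunc a hv F
  have hrep : v - s = (2⁻¹ : ℝ) • (v - ((2 : ℝ) • s - v)) := by
    rw [show v - ((2 : ℝ) • s - v) = (2 : ℝ) • (v - s) by rw [smul_sub, two_smul, two_smul]; abel,
      smul_smul]
    norm_num
  calc ‖v - s‖ = ‖(2⁻¹ : ℝ) • (v - ((2 : ℝ) • s - v))‖ := by rw [← hrep]
    _ ≤ 2⁻¹ * (‖v‖ + ‖(2 : ℝ) • s - v‖) := by
        rw [norm_smul]
        have := norm_sub_le v ((2 : ℝ) • s - v)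
        have h2 : ‖(2⁻¹ : ℝ)‖ = 2⁻¹ := by rw [Real.norm_eq_abs]; norm_num
        rw [h2]
        nlinarith [norm_nonneg ((2:ℝ) • s - v), norm_nonneg v]
    _ ≤ ‖v‖ := by rw [h]; linarith

/-- Monotone: a partial sum over a subset is dominated. -/
theorem norm_partial_subset_le (a : Γ → ℝ) {F' F : Finset Γ} (hFF : F' ⊆ F) :
    ‖∑ γ ∈ F', a γ • e γ‖ ≤ ‖∑ γ ∈ F, a γ • e γ‖ := by
  classical
  have hv : HasSum (fun γ => (if γ ∈ F then a γ else 0) • e γ) (∑ γ ∈ F, a γ • e γ) := by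
    have h0 : ∀ γ ∉ F, (if γ ∈ F then a γ else 0) • e γ = 0 := by
      intro γ hγ; simp [hγ]
    have h := hasSum_sum_of_ne_finset_zero (L := SummationFilter.unconditional _) h0
    have : ∑ γ ∈ F, (if γ ∈ F then a γ else 0) • e γ = ∑ γ ∈ F, a γ • e γ :=
      Finset.sum_congr rfl fun γ hγ => by simp [hγ]
    rwa [this] at h
  have h := norm_partial_le hunc _ hv F'
  have : ∑ γ ∈ F', (if γ ∈ F then a γ else 0) • e γ = ∑ γ ∈ F', a γ • e γ :=
    Finset.sum_congr rfl fun γ hγ => by simp [hFF hγ]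
  rwa [this] at h

/-- The tail of a convergent expansion masked off a finite set. -/
theorem hasSum_masked (a : Γ → ℝ) {v : E} (hv : HasSum (fun γ => a γ • e γ) v) (F : Finset Γ) :
    HasSum (fun γ => (if γ ∈ F then 0 else a γ) • e γ) (v - ∑ γ ∈ F, a γ • e γ) := by
  classical
  have hpart : HasSum (fun γ => (if γ ∈ F then a γ else 0) • e γ) (∑ γ ∈ F, a γ • e γ) := by
    have h0 : ∀ γ ∉ F, (if γ ∈ F then a γ else 0) • e γ = 0 := by
      intro γ hγ; simp [hγ]
    have h := hasSum_sum_of_ne_finset_zero (L := SummationFilter.unconditional _) h0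
    have : ∑ γ ∈ F, (if γ ∈ F then a γ else 0) • e γ = ∑ γ ∈ F, a γ • e γ :=
      Finset.sum_congr rfl fun γ hγ => by simp [hγ]
    rwa [this] at h
  have h := hv.sub hpart
  have : (fun γ => a γ • e γ - (if γ ∈ F then a γ else 0) • e γ)
      = fun γ => (if γ ∈ F then 0 else a γ) • e γ := by
    funext γ; by_cases hγ : γ ∈ F <;> simp [hγ]
  rwa [this] at h

end Flips

section Coeff

variable (hbasis : ∀ v : E, ∃! a : Γ → ℝ, HasSum (fun γ => a γ • e γ) v)

/-- The coordinates of `v` in the basis. -/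
noncomputable def coeff (v : E) : Γ → ℝ := (hbasis v).choose

theorem coeff_hasSum (v : E) : HasSum (fun γ => coeff hbasis v γ • e γ) v :=
  (hbasis v).choose_spec.1

theorem coeff_unique {v : E} {a : Γ → ℝ} (ha : HasSum (fun γ => a γ • e γ) v) :
    a = coeff hbasis v :=
  (hbasis v).choose_spec.2 a ha

theorem coeff_e (γ : Γ) :
    HasSum (fun γ'' => coeff hbasis (e γ) γ'' • e γ'') (e γ) := coeff_hasSum hbasis (e γ)

theorem coeff_e_eq (γ : Γ) :
    coeff hbasis (e γ) = fun γ'' => if γ'' = γ then (1 : ℝ) else 0 := by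
  classical
  have h : HasSum (fun γ'' => (if γ'' = γ then (1 : ℝ) else 0) • e γ'') (e γ) := by
    have h0 : ∀ γ'' ∉ ({γ} : Finset Γ), (if γ'' = γ then (1 : ℝ) else 0) • e γ'' = 0 := by
      intro γ'' hγ''; simp only [Finset.mem_singleton] at hγ''; simp [hγ'']
    have h := hasSum_sum_of_ne_finset_zero (L := SummationFilter.unconditional _) h0
    simpa using h
  exact (coeff_unique hbasis h).symm

theorem coeff_e_self (γ : Γ) : coeff hbasis (e γ) γ = 1 := by
  classical
  rw [coeff_e_eq hbasis γ]; simp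

theorem coeff_e_ne {γ γ' : Γ} (h : γ' ≠ γ) : coeff hbasis (e γ) γ' = 0 := by
  classical
  rw [coeff_e_eq hbasis γ]; simp [h]

theorem eq_zero_of_coeff_zero (v : E) (h : ∀ γ, coeff hbasis v γ = 0) : v = 0 := by
  have h0 : HasSum (fun γ => coeff hbasis v γ • e γ) 0 := by
    have : (fun γ => coeff hbasis v γ • e γ) = fun _ => (0 : E) := by
      funext γ; rw [h γ, zero_smul]
    rw [this]; exact hasSum_zero
  exact (coeff_hasSum hbasis v).unique h0

variable (hnorm : ∀ γ, ‖e γ‖ = 1)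
variable (hunc : ∀ (a ε : Γ → ℝ) (v w : E), (∀ γ, |ε γ| = 1) →
    HasSum (fun γ => a γ • e γ) v → HasSum (fun γ => (ε γ * a γ) • e γ) w → ‖w‖ = ‖v‖)

include hnorm hunc in
theorem abs_coeff_le (v : E) (γ : Γ) : |coeff hbasis v γ| ≤ ‖v‖ := by
  have h := norm_partial_le hunc _ (coeff_hasSum hbasis v) {γ}
  rw [Finset.sum_singleton, norm_smul, Real.norm_eq_abs, hnorm γ, mul_one] at h
  exact h

include hnorm hunc in
/-- The coordinate functionals, as continuous linear maps. -/
noncomputable def coeffCLM (γ : Γ) : E →L[ℝ] ℝ :=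
  LinearMap.mkContinuous
    { toFun := fun v => coeff hbasis v γ
      map_add' := fun u v => by
        have h : HasSum (fun γ' => (coeff hbasis u γ' + coeff hbasis v γ') • e γ') (u + v) := by
          have := (coeff_hasSum hbasis u).add (coeff_hasSum hbasis v)
          have heq : (fun γ' => coeff hbasis u γ' • e γ' + coeff hbasis v γ' • e γ')
              = fun γ' => (coeff hbasis u γ' + coeff hbasis v γ') • e γ' := by
            funext γ'; rw [add_smul]
          rwa [heq] at this
        exact (congrFun (coeff_unique hbasis h) γ).symm
      map_smul' := fun r v => by
        have h : HasSum (fun γ' => (r * coeff hbasis v γ') • e γ') (r • v) := by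
          have := (coeff_hasSum hbasis v).const_smul r
          have heq : (fun γ' => r • (coeff hbasis v γ' • e γ'))
              = fun γ' => (r * coeff hbasis v γ') • e γ' := by
            funext γ'; rw [smul_smul]
          rwa [heq] at this
        exact (congrFun (coeff_unique hbasis h) γ).symm }
    1 (fun v => by
      simpa using abs_coeff_le hbasis hnorm hunc v γ)

@[simp] theorem coeffCLM_apply (γ : Γ) (v : E) :
    coeffCLM hbasis hnorm hunc γ v = coeff hbasis v γ := rfl

end Coeff

end GrothAux

namespace GrothAux
open scoped Classical
open Filter Topology
set_option linter.unusedSectionVars false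

variable {Γ : Type*} {E : Type*} [NormedAddCommGroup E] [NormedSpace ℝ E]
  {X : Γ → Type*} [∀ γ, NormedAddCommGroup (X γ)] [∀ γ, NormedSpace ℝ (X γ)]
  {D : Type*} [NormedAddCommGroup D] [NormedSpace ℝ D]

/-- All the data of an `E`-direct sum realization. -/
structure SumStr (Γ : Type*) (E : Type*) [NormedAddCommGroup E] [NormedSpace ℝ E]
    (X : Γ → Type*) [∀ γ, NormedAddCommGroup (X γ)] [∀ γ, NormedSpace ℝ (X γ)]
    (D : Type*) [NormedAddCommGroup D] [NormedSpace ℝ D] where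
  e : Γ → E
  ι : D →ₗ[ℝ] (∀ γ, X γ)
  hnorm : ∀ γ, ‖e γ‖ = 1
  hbasis : ∀ v : E, ∃! a : Γ → ℝ, HasSum (fun γ => a γ • e γ) v
  hunc : ∀ (a ε : Γ → ℝ) (v w : E), (∀ γ, |ε γ| = 1) →
      HasSum (fun γ => a γ • e γ) v → HasSum (fun γ => (ε γ * a γ) • e γ) w → ‖w‖ = ‖v‖
  hinj : Function.Injective ι
  hmem : ∀ d : D, Summable fun γ => ‖ι d γ‖ • e γ
  hsurj : ∀ x : ∀ γ, X γ, (Summable fun γ => ‖x γ‖ • e γ) → ∃ d : D, ι d = x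
  hnormD : ∀ d : D, ‖d‖ = ‖∑' γ, ‖ι d γ‖ • e γ‖

namespace SumStr

variable (S : SumStr Γ E X D)

/-- The coordinate bound: each coordinate of `d` is dominated by `‖d‖`. -/
theorem norm_iota_le (d : D) (γ : Γ) : ‖S.ι d γ‖ ≤ ‖d‖ := by
  have hv := (S.hmem d).hasSum
  have h := norm_partial_le S.hunc _ hv {γ}
  rw [Finset.sum_singleton, norm_smul, Real.norm_eq_abs, abs_of_nonneg (norm_nonneg _),
    S.hnorm γ, mul_one] at h
  rw [S.hnormD d]
  exact h

/-- The coordinate projections `D → X γ`. -/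
noncomputable def Pc (γ : Γ) : D →L[ℝ] X γ :=
  LinearMap.mkContinuous ((LinearMap.proj γ : (∀ γ', X γ') →ₗ[ℝ] X γ).comp S.ι) 1
    (fun d => by simpa using S.norm_iota_le d γ)

@[simp] theorem Pc_apply (γ : Γ) (d : D) : S.Pc γ d = S.ι d γ := rfl

theorem single_summable (γ : Γ) (x : X γ) :
    Summable (fun γ' => ‖Pi.single γ x γ'‖ • S.e γ') := by
  classical
  refine summable_of_ne_finset_zero (s := {γ}) fun γ' h => ?_
  simp only [Finset.mem_singleton] at h
  rw [Pi.single_eq_of_ne h]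
  simp

/-- The underlying function of the embedding `X γ → D`. -/
noncomputable def jfun (γ : Γ) (x : X γ) : D :=
  (S.hsurj (Pi.single γ x) (S.single_summable γ x)).choose

theorem iota_jfun (γ : Γ) (x : X γ) : S.ι (S.jfun γ x) = Pi.single γ x :=
  (S.hsurj (Pi.single γ x) (S.single_summable γ x)).choose_spec

theorem norm_jfun (γ : Γ) (x : X γ) : ‖S.jfun γ x‖ = ‖x‖ := by
  classical
  rw [S.hnormD, S.iota_jfun]
  have h0 : ∀ γ' ∉ ({γ} : Finset Γ), ‖Pi.single γ x γ'‖ • S.e γ' = 0 := by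
    intro γ' h
    simp only [Finset.mem_singleton] at h
    rw [Pi.single_eq_of_ne h]; simp
  rw [tsum_eq_sum h0, Finset.sum_singleton, Pi.single_eq_same, norm_smul, Real.norm_eq_abs,
    abs_of_nonneg (norm_nonneg _), S.hnorm γ, mul_one]

/-- The coordinate embeddings `X γ → D`. -/
noncomputable def Jc (γ : Γ) : X γ →L[ℝ] D :=
  LinearMap.mkContinuous
    { toFun := S.jfun γ
      map_add' := fun x y => S.hinj (by
        rw [map_add, S.iota_jfun, S.iota_jfun, S.iota_jfun, Pi.single_add])
      map_smul' := fun r x => by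
        refine S.hinj ?_
        rw [S.iota_jfun]
        simp only [RingHom.id_apply]
        rw [map_smul, S.iota_jfun, Pi.single_smul] }
    1 (fun x => by simpa using (S.norm_jfun γ x).le)

theorem iota_Jc (γ : Γ) (x : X γ) : S.ι (S.Jc γ x) = Pi.single γ x := S.iota_jfun γ x

theorem Pc_Jc (γ : Γ) (x : X γ) : S.Pc γ (S.Jc γ x) = x := by
  classical
  show S.ι (S.Jc γ x) γ = x
  rw [S.iota_Jc, Pi.single_eq_same]

theorem norm_Jc_apply (γ : Γ) (x : X γ) : ‖S.Jc γ x‖ = ‖x‖ := S.norm_jfun γ x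

/-- Projections onto finitely many coordinates. -/
noncomputable def PFc (F : Finset Γ) : D →L[ℝ] D :=
  ∑ γ ∈ F, (S.Jc γ).comp (S.Pc γ)

theorem iota_PFc (F : Finset Γ) (d : D) (γ' : Γ) :
    S.ι (S.PFc F d) γ' = if γ' ∈ F then S.ι d γ' else 0 := by
  classical
  have h1 : S.PFc F d = ∑ γ ∈ F, S.Jc γ (S.ι d γ) := by
    rw [PFc, ContinuousLinearMap.sum_apply]
    rfl
  rw [h1, map_sum]
  have h2 : ∀ γ ∈ F, S.ι (S.Jc γ (S.ι d γ)) = Pi.single γ (S.ι d γ) :=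
    fun γ _ => S.iota_Jc γ (S.ι d γ)
  rw [Finset.sum_congr rfl h2, Finset.sum_apply]
  exact Finset.sum_pi_single γ' (fun γ => S.ι d γ) F

theorem norm_PFc_eq (F : Finset Γ) (d : D) :
    ‖S.PFc F d‖ = ‖∑ γ ∈ F, ‖S.ι d γ‖ • S.e γ‖ := by
  classical
  rw [S.hnormD]
  congr 1
  have h0 : ∀ γ' ∉ F, ‖S.ι (S.PFc F d) γ'‖ • S.e γ' = 0 := by
    intro γ' h
    rw [S.iota_PFc, if_neg h]
    simp
  rw [tsum_eq_sum h0]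
  exact Finset.sum_congr rfl fun γ hγ => by rw [S.iota_PFc, if_pos hγ]

theorem norm_PFc_le (F : Finset Γ) (d : D) : ‖S.PFc F d‖ ≤ ‖d‖ := by
  rw [S.norm_PFc_eq, S.hnormD d]
  exact norm_partial_le S.hunc _ (S.hmem d).hasSum F

theorem norm_sub_PFc_eq (F : Finset Γ) (d : D) :
    ‖d - S.PFc F d‖ = ‖(∑' γ, ‖S.ι d γ‖ • S.e γ) - ∑ γ ∈ F, ‖S.ι d γ‖ • S.e γ‖ := by
  classical
  rw [S.hnormD]
  have hmask := hasSum_masked S.hunc _ (S.hmem d).hasSum F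
  have hfe : (fun γ => ‖S.ι (d - S.PFc F d) γ‖ • S.e γ)
      = fun γ => (if γ ∈ F then 0 else ‖S.ι d γ‖) • S.e γ := by
    funext γ
    rw [map_sub]
    by_cases hγ : γ ∈ F
    · simp only [Pi.sub_apply, S.iota_PFc F d γ, if_pos hγ, sub_self, hγ, if_pos]
      simp
    · simp only [Pi.sub_apply, S.iota_PFc F d γ, if_neg hγ, sub_zero, hγ, if_neg,
        not_false_iff]
  rw [hfe, ← hmask.tsum_eq]

theorem norm_sub_PFc_le (F : Finset Γ) (d : D) : ‖d - S.PFc F d‖ ≤ ‖d‖ := by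
  rw [S.norm_sub_PFc_eq, S.hnormD d]
  exact norm_sub_partial_le S.hunc _ (S.hmem d).hasSum F

theorem tendsto_norm_sub_PFc (d : D) :
    Tendsto (fun F : Finset Γ => ‖d - S.PFc F d‖) atTop (𝓝 0) := by
  have heq : (fun F : Finset Γ => ‖d - S.PFc F d‖)
      = fun F => ‖(∑' γ, ‖S.ι d γ‖ • S.e γ) - ∑ γ ∈ F, ‖S.ι d γ‖ • S.e γ‖ := by
    funext F; exact S.norm_sub_PFc_eq F d
  rw [heq]
  have hv : Tendsto (fun F : Finset Γ => ∑ γ ∈ F, ‖S.ι d γ‖ • S.e γ) atTop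
      (𝓝 (∑' γ, ‖S.ι d γ‖ • S.e γ)) := (S.hmem d).hasSum
  have h := ((tendsto_const_nhds (x := ∑' γ, ‖S.ι d γ‖ • S.e γ)
      (f := atTop (α := Finset Γ))).sub hv).norm
  simpa using h

theorem PFc_sub_eq_zero {F G : Finset Γ} (hFG : F ⊆ G) (d : D) :
    S.PFc F (d - S.PFc G d) = 0 := by
  classical
  refine S.hinj ?_
  rw [map_zero]
  funext γ
  rw [S.iota_PFc]
  by_cases hγ : γ ∈ F
  · rw [if_pos hγ, map_sub]
    simp only [Pi.sub_apply, S.iota_PFc G d γ, if_pos (hFG hγ), sub_self]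
    rfl
  · rw [if_neg hγ]; rfl

end SumStr

end GrothAux

namespace GrothAux
open scoped Classical
open Filter Topology NormedSpace
set_option linter.unusedSectionVars false
set_option maxHeartbeats 1000000

/-- An almost-norming vector for a functional, of norm exactly one (or zero). -/
theorem exists_norming {Y : Type*} [NormedAddCommGroup Y] [NormedSpace ℝ Y]
    (T : Y →L[ℝ] ℝ) {η : ℝ} (hη : 0 < η) :
    ∃ y : Y, (‖y‖ = 1 ∨ y = 0) ∧ ‖T‖ - η ≤ T y := by
  by_cases h : ‖T‖ ≤ η
  · refine ⟨0, Or.inr rfl, ?_⟩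
    rw [map_zero]; linarith
  push_neg at h
  obtain ⟨y0, hy01, hTy0⟩ := T.exists_lt_apply_of_lt_opNorm (show ‖T‖ - η < ‖T‖ by linarith)
  have hTpos : (0 : ℝ) < ‖T y0‖ := lt_of_le_of_lt (by linarith) hTy0
  have hy0ne : y0 ≠ 0 := by
    intro h0
    rw [h0] at hTpos; simp at hTpos
  have hny0 : 0 < ‖y0‖ := norm_pos_iff.mpr hy0ne
  set s : ℝ := if T y0 < 0 then -1 else 1 with hs
  have hsT : s * T y0 = ‖T y0‖ := by
    rw [Real.norm_eq_abs]
    by_cases hneg : T y0 < 0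
    · rw [hs, if_pos hneg, abs_of_neg hneg]; ring
    · rw [hs, if_neg hneg, abs_of_nonneg (not_lt.mp hneg)]; ring
  refine ⟨(s / ‖y0‖) • y0, Or.inl ?_, ?_⟩
  · rw [norm_smul, Real.norm_eq_abs, abs_div]
    have h1 : |s| = 1 := by
      rw [hs]; by_cases hneg : T y0 < 0 <;> simp [hneg]
    rw [h1, abs_of_nonneg hny0.le]
    field_simp
  · rw [map_smul]
    have h1 : (s / ‖y0‖) • T y0 = ‖T y0‖ / ‖y0‖ := by
      rw [smul_eq_mul, div_mul_eq_mul_div, hsT]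
    rw [h1]
    have h2 : ‖T y0‖ ≤ ‖T y0‖ / ‖y0‖ := by
      rw [le_div_iff₀ hny0]
      nlinarith
    linarith

variable {Γ : Type*} {E : Type*} [NormedAddCommGroup E] [NormedSpace ℝ E]
  {X : Γ → Type*} [∀ γ, NormedAddCommGroup (X γ)] [∀ γ, NormedSpace ℝ (X γ)]
  {D : Type*} [NormedAddCommGroup D] [NormedSpace ℝ D]

namespace SumStr

variable (S : SumStr Γ E X D)

/-- Precomposition with the coordinate projection: `X γ* → D*`. -/
noncomputable def Rc (γ : Γ) : (X γ →L[ℝ] ℝ) →L[ℝ] (D →L[ℝ] ℝ) :=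
  (ContinuousLinearMap.compL ℝ D (X γ) ℝ).flip (S.Pc γ)

@[simp] theorem Rc_apply (γ : Γ) (k : X γ →L[ℝ] ℝ) : S.Rc γ k = k.comp (S.Pc γ) := rfl

/-- Precomposition with the coordinate embedding: `D* → X γ*`. -/
noncomputable def Qc (γ : Γ) : (D →L[ℝ] ℝ) →L[ℝ] (X γ →L[ℝ] ℝ) :=
  (ContinuousLinearMap.compL ℝ (X γ) D ℝ).flip (S.Jc γ)

@[simp] theorem Qc_apply (γ : Γ) (ψ : D →L[ℝ] ℝ) : S.Qc γ ψ = ψ.comp (S.Jc γ) := rfl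

/-- The fundamental pairing estimate between nonnegative weights and a functional. -/
theorem pairing (c : Γ → ℝ) (hc : ∀ γ, 0 ≤ c γ) (ψ : D →L[ℝ] ℝ) (T : Finset Γ) :
    ∑ γ ∈ T, c γ * ‖ψ.comp (S.Jc γ)‖ ≤ ‖ψ‖ * ‖∑ γ ∈ T, c γ • S.e γ‖ := by
  classical
  refine le_of_forall_pos_le_add fun ε hε => ?_
  have hBpos : (0 : ℝ) < (∑ γ ∈ T, c γ) + 1 := by
    have := Finset.sum_nonneg (fun γ (_ : γ ∈ T) => hc γ)
    linarith
  set η : ℝ := ε / ((∑ γ ∈ T, c γ) + 1) with hηdef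
  have hη : 0 < η := div_pos hε hBpos
  choose xs hxs1 hxs2 using fun γ => exists_norming (ψ.comp (S.Jc γ)) hη
  set d : D := ∑ γ ∈ T, S.Jc γ (c γ • xs γ) with hd
  have hψd : ψ d = ∑ γ ∈ T, c γ * ψ (S.Jc γ (xs γ)) := by
    rw [hd, map_sum]
    exact Finset.sum_congr rfl fun γ _ => by rw [map_smul, map_smul, smul_eq_mul]
  have hlow : ∑ γ ∈ T, c γ * ‖ψ.comp (S.Jc γ)‖ - ε ≤ ψ d := by
    rw [hψd]
    have h1 : ∀ γ ∈ T, c γ * ‖ψ.comp (S.Jc γ)‖ - c γ * η ≤ c γ * ψ (S.Jc γ (xs γ)) := by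
      intro γ _
      have h2 := hxs2 γ
      have h3 : (ψ.comp (S.Jc γ)) (xs γ) = ψ (S.Jc γ (xs γ)) := rfl
      rw [h3] at h2
      nlinarith [hc γ]
    have h4 := Finset.sum_le_sum h1
    rw [Finset.sum_sub_distrib, ← Finset.sum_mul] at h4
    have h6 : η * ((∑ γ ∈ T, c γ) + 1) = ε := div_mul_cancel₀ _ hBpos.ne'
    have h5 : (∑ γ ∈ T, c γ) * η ≤ ε := by nlinarith
    linarith
  have hιd : ∀ γ', S.ι d γ' = if γ' ∈ T then c γ' • xs γ' else 0 := by
    intro γ'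
    rw [hd, map_sum]
    have h2 : ∀ γ ∈ T, S.ι (S.Jc γ (c γ • xs γ)) = Pi.single γ (c γ • xs γ) :=
      fun γ _ => S.iota_Jc γ _
    rw [Finset.sum_congr rfl h2, Finset.sum_apply]
    exact Finset.sum_pi_single γ' _ T
  have hnd : ‖d‖ ≤ ‖∑ γ ∈ T, c γ • S.e γ‖ := by
    rw [S.hnormD d]
    have h0 : ∀ γ' ∉ T, ‖S.ι d γ'‖ • S.e γ' = 0 := by
      intro γ' h
      rw [hιd γ', if_neg h]; simp
    rw [tsum_eq_sum h0]
    have h1 : ∑ γ ∈ T, ‖S.ι d γ‖ • S.e γ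
        = ∑ γ ∈ T.filter (fun γ => xs γ ≠ 0), c γ • S.e γ := by
      rw [Finset.sum_filter]
      refine Finset.sum_congr rfl fun γ hγ => ?_
      rw [hιd γ, if_pos hγ, norm_smul, Real.norm_eq_abs, abs_of_nonneg (hc γ)]
      by_cases hx : xs γ = 0
      · rw [if_neg (by simpa using hx), hx]; simp
      · rw [if_pos hx]
        rcases hxs1 γ with h1 | h1
        · rw [h1, mul_one]
        · exact absurd h1 hx
    rw [h1]
    exact norm_partial_subset_le S.hunc _ (Finset.filter_subset _ _)
  have hup : ψ d ≤ ‖ψ‖ * ‖∑ γ ∈ T, c γ • S.e γ‖ :=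
    calc ψ d ≤ |ψ d| := le_abs_self _
    _ ≤ ‖ψ‖ * ‖d‖ := by rw [← Real.norm_eq_abs]; exact ψ.le_opNorm d
    _ ≤ ‖ψ‖ * ‖∑ γ ∈ T, c γ • S.e γ‖ := mul_le_mul_of_nonneg_left hnd (norm_nonneg ψ)
  linarith

/-- The dual pairing estimate for the coordinates of a functional on `D*`. -/
theorem pairing_dual (φ : (D →L[ℝ] ℝ) →L[ℝ] ℝ) (ξ : E →L[ℝ] ℝ) (F : Finset Γ) :
    ∑ γ ∈ F, ‖φ.comp (S.Rc γ)‖ * |ξ (S.e γ)| ≤ ‖φ‖ * ‖ξ‖ := by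
  classical
  refine le_of_forall_pos_le_add fun ε hε => ?_
  have hBpos : (0 : ℝ) < ((F.card : ℝ) + 1) * (‖ξ‖ + 1) := by positivity
  set η : ℝ := ε / (((F.card : ℝ) + 1) * (‖ξ‖ + 1)) with hηdef
  have hη : 0 < η := div_pos hε hBpos
  choose ks hks1 hks2 using fun γ => exists_norming (φ.comp (S.Rc γ)) hη
  have hksle : ∀ γ, ‖ks γ‖ ≤ 1 := by
    intro γ
    rcases hks1 γ with h | h
    · rw [h]
    · rw [h]; simp
  set Ψ : D →L[ℝ] ℝ := ∑ γ ∈ F, |ξ (S.e γ)| • (S.Rc γ (ks γ)) with hΨ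
  have hφΨ : φ Ψ = ∑ γ ∈ F, |ξ (S.e γ)| * φ (S.Rc γ (ks γ)) := by
    rw [hΨ, map_sum]
    exact Finset.sum_congr rfl fun γ _ => by rw [map_smul, smul_eq_mul]
  have hξe : ∀ γ, |ξ (S.e γ)| ≤ ‖ξ‖ := by
    intro γ
    have h := ξ.le_opNorm (S.e γ)
    rw [S.hnorm γ, mul_one, Real.norm_eq_abs] at h
    exact h
  have hlow : ∑ γ ∈ F, ‖φ.comp (S.Rc γ)‖ * |ξ (S.e γ)| - ε ≤ φ Ψ := by
    rw [hφΨ]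
    have h1 : ∀ γ ∈ F, ‖φ.comp (S.Rc γ)‖ * |ξ (S.e γ)| - η * ‖ξ‖
        ≤ |ξ (S.e γ)| * φ (S.Rc γ (ks γ)) := by
      intro γ _
      have h2 := hks2 γ
      have h3 : (φ.comp (S.Rc γ)) (ks γ) = φ (S.Rc γ (ks γ)) := rfl
      rw [h3] at h2
      have h4 := abs_nonneg (ξ (S.e γ))
      have h5 := hξe γ
      nlinarith
    have h4 := Finset.sum_le_sum h1
    rw [Finset.sum_sub_distrib, Finset.sum_const, nsmul_eq_mul] at h4
    have h6 : η * (((F.card : ℝ) + 1) * (‖ξ‖ + 1)) = ε := div_mul_cancel₀ _ hBpos.ne'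
    have h7 : (0 : ℝ) ≤ (F.card : ℝ) := Nat.cast_nonneg _
    have h5 : (F.card : ℝ) * (η * ‖ξ‖) ≤ ε := by nlinarith [norm_nonneg ξ, hη.le]
    linarith
  have hΨle : ‖Ψ‖ ≤ ‖ξ‖ := by
    refine ContinuousLinearMap.opNorm_le_bound _ (norm_nonneg ξ) fun d => ?_
    have h1 : Ψ d = ∑ γ ∈ F, |ξ (S.e γ)| * (ks γ) (S.ι d γ) := by
      rw [hΨ, ContinuousLinearMap.sum_apply]
      exact Finset.sum_congr rfl fun γ _ => by
        rw [ContinuousLinearMap.smul_apply, smul_eq_mul]; rfl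
    rw [Real.norm_eq_abs, h1]
    have h2 : |∑ γ ∈ F, |ξ (S.e γ)| * (ks γ) (S.ι d γ)|
        ≤ ∑ γ ∈ F, |ξ (S.e γ)| * ‖S.ι d γ‖ := by
      refine (Finset.abs_sum_le_sum_abs _ _).trans (Finset.sum_le_sum fun γ _ => ?_)
      rw [abs_mul, abs_abs]
      refine mul_le_mul_of_nonneg_left ?_ (abs_nonneg _)
      have h3 := (ks γ).le_opNorm (S.ι d γ)
      rw [Real.norm_eq_abs] at h3
      calc |(ks γ) (S.ι d γ)| ≤ ‖ks γ‖ * ‖S.ι d γ‖ := h3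
      _ ≤ 1 * ‖S.ι d γ‖ := mul_le_mul_of_nonneg_right (hksle γ) (norm_nonneg _)
      _ = ‖S.ι d γ‖ := one_mul _
    set sg : Γ → ℝ := fun γ => if ξ (S.e γ) < 0 then -1 else 1 with hsg
    have h3 : ∑ γ ∈ F, |ξ (S.e γ)| * ‖S.ι d γ‖
        = ξ (∑ γ ∈ F, (sg γ * ‖S.ι d γ‖) • S.e γ) := by
      rw [map_sum]
      refine Finset.sum_congr rfl fun γ _ => ?_
      rw [map_smul, smul_eq_mul]
      by_cases hneg : ξ (S.e γ) < 0
      · rw [hsg]; simp only [if_pos hneg]; rw [abs_of_neg hneg]; ring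
      · rw [hsg]; simp only [if_neg hneg]; rw [abs_of_nonneg (not_lt.mp hneg)]; ring
    have h4 : ξ (∑ γ ∈ F, (sg γ * ‖S.ι d γ‖) • S.e γ)
        ≤ ‖ξ‖ * ‖∑ γ ∈ F, (sg γ * ‖S.ι d γ‖) • S.e γ‖ :=
      calc _ ≤ |ξ (∑ γ ∈ F, (sg γ * ‖S.ι d γ‖) • S.e γ)| := le_abs_self _
      _ ≤ _ := by rw [← Real.norm_eq_abs]; exact ξ.le_opNorm _
    have h5 : ‖∑ γ ∈ F, (sg γ * ‖S.ι d γ‖) • S.e γ‖ = ‖∑ γ ∈ F, ‖S.ι d γ‖ • S.e γ‖ := by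
      refine norm_flip_sum S.hunc _ sg F fun γ _ => ?_
      rw [hsg]; by_cases hneg : ξ (S.e γ) < 0 <;> simp [hneg]
    have h6 : ‖∑ γ ∈ F, ‖S.ι d γ‖ • S.e γ‖ ≤ ‖d‖ := by
      rw [S.hnormD d]; exact norm_partial_le S.hunc _ (S.hmem d).hasSum F
    have h7 : ‖ξ‖ * ‖∑ γ ∈ F, ‖S.ι d γ‖ • S.e γ‖ ≤ ‖ξ‖ * ‖d‖ :=
      mul_le_mul_of_nonneg_left h6 (norm_nonneg ξ)
    rw [h5] at h4
    linarith [h2, h3 ▸ h4]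
  have hfin : φ Ψ ≤ ‖φ‖ * ‖ξ‖ :=
    calc φ Ψ ≤ |φ Ψ| := le_abs_self _
    _ ≤ ‖φ‖ * ‖Ψ‖ := by rw [← Real.norm_eq_abs]; exact φ.le_opNorm Ψ
    _ ≤ ‖φ‖ * ‖ξ‖ := mul_le_mul_of_nonneg_left hΨle (norm_nonneg φ)
  linarith

/-- Step (i): the coefficient profile of a functional on `D*` has partial sums
bounded by `‖φ‖`. -/
theorem norm_csum_le (φ : (D →L[ℝ] ℝ) →L[ℝ] ℝ) (F : Finset Γ) :
    ‖∑ γ ∈ F, ‖φ.comp (S.Rc γ)‖ • S.e γ‖ ≤ ‖φ‖ := by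
  by_cases hs : (∑ γ ∈ F, ‖φ.comp (S.Rc γ)‖ • S.e γ) = 0
  · rw [hs]; simp only [norm_zero]; exact norm_nonneg φ
  obtain ⟨ξ, hξ1, hξ2'⟩ := exists_dual_vector ℝ _ (norm_ne_zero_iff.mpr hs)
  have hξ2 : ξ (∑ γ ∈ F, ‖φ.comp (S.Rc γ)‖ • S.e γ)
      = ‖∑ γ ∈ F, ‖φ.comp (S.Rc γ)‖ • S.e γ‖ := by exact_mod_cast hξ2'
  have h1 : ‖∑ γ ∈ F, ‖φ.comp (S.Rc γ)‖ • S.e γ‖ = ξ (∑ γ ∈ F, ‖φ.comp (S.Rc γ)‖ • S.e γ) := by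
    rw [hξ2]
  have h2 : ξ (∑ γ ∈ F, ‖φ.comp (S.Rc γ)‖ • S.e γ)
      = ∑ γ ∈ F, ‖φ.comp (S.Rc γ)‖ * ξ (S.e γ) := by
    rw [map_sum]
    exact Finset.sum_congr rfl fun γ _ => by rw [map_smul, smul_eq_mul]
  have h3 : ∑ γ ∈ F, ‖φ.comp (S.Rc γ)‖ * ξ (S.e γ)
      ≤ ∑ γ ∈ F, ‖φ.comp (S.Rc γ)‖ * |ξ (S.e γ)| :=
    Finset.sum_le_sum fun γ _ =>
      mul_le_mul_of_nonneg_left (le_abs_self _) (norm_nonneg (φ.comp (S.Rc γ)))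
  have h4 := S.pairing_dual φ ξ F
  rw [hξ1, mul_one] at h4
  linarith [h1 ▸ h2 ▸ le_trans h3 h4]

/-- Step (ii): using reflexivity of `E`, the coefficient profile of `φ` is summable. -/
theorem summable_c (hrefl : Function.Surjective (inclusionInDoubleDual ℝ E))
    (φ : (D →L[ℝ] ℝ) →L[ℝ] ℝ) :
    Summable (fun γ => ‖φ.comp (S.Rc γ)‖ • S.e γ) := by
  classical
  set c : Γ → ℝ := fun γ => ‖φ.comp (S.Rc γ)‖ with hcdef
  have hc0 : ∀ γ, 0 ≤ c γ := fun γ => by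
    rw [hcdef]; exact norm_nonneg (φ.comp (S.Rc γ))
  have hpair : ∀ (ξ : E →L[ℝ] ℝ) (u : Finset Γ), ∑ γ ∈ u, c γ * |ξ (S.e γ)| ≤ ‖φ‖ * ‖ξ‖ := by
    intro ξ u
    exact S.pairing_dual φ ξ u
  have habs : ∀ ξ : E →L[ℝ] ℝ, Summable (fun γ => c γ * |ξ (S.e γ)|) := fun ξ =>
    summable_of_sum_le (fun γ => mul_nonneg (hc0 γ) (abs_nonneg _)) (hpair ξ)
  have hsum : ∀ ξ : E →L[ℝ] ℝ, Summable (fun γ => c γ * ξ (S.e γ)) := by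
    intro ξ
    rw [← summable_abs_iff]
    have heq : (fun γ => |c γ * ξ (S.e γ)|) = fun γ => c γ * |ξ (S.e γ)| := by
      funext γ; rw [abs_mul, abs_of_nonneg (hc0 γ)]
    rw [heq]
    exact habs ξ
  set Φ₀ : (E →L[ℝ] ℝ) →ₗ[ℝ] ℝ :=
    { toFun := fun ξ => ∑' γ, c γ * ξ (S.e γ)
      map_add' := fun ξ ζ => by
        have heq : (fun γ => c γ * (ξ + ζ) (S.e γ))
            = fun γ => c γ * ξ (S.e γ) + c γ * ζ (S.e γ) := by
          funext γ
          rw [ContinuousLinearMap.add_apply]; ring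
        rw [heq, Summable.tsum_add (hsum ξ) (hsum ζ)]
      map_smul' := fun r ξ => by
        have heq : (fun γ => c γ * (r • ξ) (S.e γ)) = fun γ => r * (c γ * ξ (S.e γ)) := by
          funext γ
          rw [ContinuousLinearMap.smul_apply, smul_eq_mul]; ring
        simp only [RingHom.id_apply, smul_eq_mul]
        rw [heq, tsum_mul_left] } with hΦ₀
  have hΦbound : ∀ ξ : E →L[ℝ] ℝ, ‖Φ₀ ξ‖ ≤ ‖φ‖ * ‖ξ‖ := by
    intro ξ
    have heq : (fun γ => ‖c γ * ξ (S.e γ)‖) = fun γ => c γ * |ξ (S.e γ)| := by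
      funext γ; rw [Real.norm_eq_abs, abs_mul, abs_of_nonneg (hc0 γ)]
    have h1 : ‖Φ₀ ξ‖ ≤ ∑' γ, ‖c γ * ξ (S.e γ)‖ := by
      refine norm_tsum_le_tsum_norm ?_
      rw [heq]; exact habs ξ
    rw [heq] at h1
    have h2 : ∑' γ, c γ * |ξ (S.e γ)| ≤ ‖φ‖ * ‖ξ‖ :=
      Summable.tsum_le_of_sum_le (habs ξ) (hpair ξ)
    linarith
  set Φ : StrongDual ℝ (StrongDual ℝ E) := LinearMap.mkContinuous Φ₀ ‖φ‖ hΦbound with hΦdef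
  obtain ⟨v, hv⟩ := hrefl Φ
  have hval : ∀ ξ : E →L[ℝ] ℝ, ξ v = ∑' γ, c γ * ξ (S.e γ) := by
    intro ξ
    have h1 : inclusionInDoubleDual ℝ E v ξ = Φ ξ := by rw [hv]
    rw [dual_def] at h1
    exact h1
  have hcoeff : ∀ γ, coeff S.hbasis v γ = c γ := by
    intro γ
    have h1 : coeffCLM S.hbasis S.hnorm S.hunc γ v
        = ∑' γ', c γ' * coeffCLM S.hbasis S.hnorm S.hunc γ (S.e γ') :=
      hval (coeffCLM S.hbasis S.hnorm S.hunc γ)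
    rw [coeffCLM_apply] at h1
    have h2 : ∑' γ', c γ' * coeffCLM S.hbasis S.hnorm S.hunc γ (S.e γ') = c γ := by
      rw [tsum_eq_single γ]
      · rw [coeffCLM_apply, coeff_e_self S.hbasis γ, mul_one]
      · intro γ' hγ'
        rw [coeffCLM_apply, coeff_e_ne S.hbasis (Ne.symm hγ'), mul_zero]
    rw [h2] at h1
    exact h1
  have hfin : HasSum (fun γ => c γ • S.e γ) v := by
    have h := coeff_hasSum S.hbasis v
    have heq : (fun γ => coeff S.hbasis v γ • S.e γ) = fun γ => c γ • S.e γ := by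
      funext γ; rw [hcoeff γ]
    rwa [heq] at h
  exact ⟨v, hfin⟩

end SumStr

end GrothAux

namespace GrothAux
open scoped Classical
open Filter Topology NormedSpace
set_option linter.unusedSectionVars false
set_option maxHeartbeats 1600000

variable {Γ : Type*} {E : Type*} [NormedAddCommGroup E] [NormedSpace ℝ E]
  {X : Γ → Type*} [∀ γ, NormedAddCommGroup (X γ)] [∀ γ, NormedSpace ℝ (X γ)]
  {D : Type*} [NormedAddCommGroup D] [NormedSpace ℝ D]

namespace SumStr

variable (S : SumStr Γ E X D)

theorem sub_comp_PFc_apply (ψ : D →L[ℝ] ℝ) (F : Finset Γ) (d : D) :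
    (ψ - ψ.comp (S.PFc F)) d = ψ (d - S.PFc F d) := by
  rw [ContinuousLinearMap.sub_apply, ContinuousLinearMap.comp_apply, map_sub]

/-- Shrinking: every functional on `D` is approximated in norm by its
finite-dimensional restrictions.  Uses the reflexivity of `E`. -/
theorem shrink (hrefl : Function.Surjective (inclusionInDoubleDual ℝ E))
    (ψ : D →L[ℝ] ℝ) {δ : ℝ} (hδ : 0 < δ) :
    ∃ F : Finset Γ, ‖ψ - ψ.comp (S.PFc F)‖ < δ := by
  by_contra hcon
  push_neg at hcon
  have hψpos : 0 < ‖ψ‖ := by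
    have h := hcon ∅
    have h0 : S.PFc (∅ : Finset Γ) = 0 := Finset.sum_empty
    rw [h0] at h
    have h1 : ψ.comp (0 : D →L[ℝ] D) = 0 := by ext d; simp
    rw [h1, sub_zero] at h
    linarith
  -- one step of the gliding hump
  have hstep : ∀ G : Finset Γ, ∃ p : Finset Γ × D, G ⊆ p.1 ∧ ‖p.2‖ ≤ 1 ∧
      (∀ γ, S.ι p.2 γ ≠ 0 → (γ ∈ p.1 ∧ γ ∉ G)) ∧ δ / 4 ≤ ψ p.2 := by
    intro G
    have h1 : δ / 2 < ‖ψ - ψ.comp (S.PFc G)‖ := lt_of_lt_of_le (by linarith) (hcon G)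
    obtain ⟨x, hx1, hx2⟩ := (ψ - ψ.comp (S.PFc G)).exists_lt_apply_of_lt_opNorm h1
    set q : ℝ := (ψ - ψ.comp (S.PFc G)) x with hq
    set sg : ℝ := if q < 0 then -1 else 1 with hsg
    have hsgone : ‖sg‖ = 1 := by
      rw [hsg]; by_cases h : q < 0 <;> simp [h]
    set d1 : D := sg • x with hd1
    have hd1n : ‖d1‖ ≤ 1 := by
      rw [hd1, norm_smul, hsgone, one_mul]; exact hx1.le
    have hval : δ / 2 < (ψ - ψ.comp (S.PFc G)) d1 := by
      rw [hd1, map_smul, smul_eq_mul, ← hq]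
      rw [Real.norm_eq_abs] at hx2
      by_cases h : q < 0
      · rw [hsg, if_pos h]
        rw [abs_of_neg h] at hx2
        linarith
      · rw [hsg, if_neg h]
        rw [abs_of_nonneg (not_lt.mp h)] at hx2
        linarith
    set d' : D := d1 - S.PFc G d1 with hd'
    have hψd' : δ / 2 < ψ d' := by
      have h2 : (ψ - ψ.comp (S.PFc G)) d1 = ψ d' := S.sub_comp_PFc_apply ψ G d1
      linarith [h2 ▸ hval]
    have hd'n : ‖d'‖ ≤ 1 := le_trans (S.norm_sub_PFc_le G d1) hd1n
    have hd'supp : ∀ γ ∈ G, S.ι d' γ = 0 := by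
      intro γ hγ
      rw [hd', map_sub]
      simp only [Pi.sub_apply, S.iota_PFc G d1 γ, if_pos hγ, sub_self]
    have htail := S.tendsto_norm_sub_PFc d'
    have hev : ∀ᶠ H in atTop, ‖d' - S.PFc H d'‖ < δ / (4 * (‖ψ‖ + 1)) := by
      refine htail.eventually_lt_const ?_
      positivity
    obtain ⟨F₀, hF₀⟩ := eventually_atTop.mp hev
    set H : Finset Γ := F₀ ∪ G with hH
    have hHle := hF₀ H (by rw [hH]; exact Finset.subset_union_left)
    set d2 : D := S.PFc H d' with hd2
    refine ⟨(H, d2), by rw [hH]; exact Finset.subset_union_right, ?_, ?_, ?_⟩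
    · exact le_trans (S.norm_PFc_le H d') hd'n
    · intro γ hγ
      constructor
      · by_contra hmem
        rw [hd2, S.iota_PFc, if_neg hmem] at hγ
        exact hγ rfl
      · intro hmemG
        apply hγ
        rw [hd2, S.iota_PFc]
        by_cases hmemH : γ ∈ H
        · rw [if_pos hmemH]; exact hd'supp γ hmemG
        · rw [if_neg hmemH]
    · have h2 : ψ d' - ψ d2 = ψ (d' - d2) := (map_sub ψ d' d2).symm
      have h3 : ψ (d' - d2) ≤ |ψ (d' - d2)| := le_abs_self _
      have h3' : |ψ (d' - d2)| ≤ ‖ψ‖ * ‖d' - d2‖ := by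
        rw [← Real.norm_eq_abs]; exact ψ.le_opNorm _
      have h4 : ‖ψ‖ * ‖d' - S.PFc H d'‖ ≤ ‖ψ‖ * (δ / (4 * (‖ψ‖ + 1))) :=
        mul_le_mul_of_nonneg_left hHle.le (norm_nonneg ψ)
      have h5 : ‖ψ‖ * (δ / (4 * (‖ψ‖ + 1))) ≤ δ / 4 := by
        have hx : ‖ψ‖ / (‖ψ‖ + 1) ≤ 1 := by
          rw [div_le_one (by positivity)]; linarith
        have heq : ‖ψ‖ * (δ / (4 * (‖ψ‖ + 1))) = (δ / 4) * (‖ψ‖ / (‖ψ‖ + 1)) := by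
          field_simp
        rw [heq]
        nlinarith
      have h6 : ψ (d' - d2) ≤ δ / 4 := by
        calc ψ (d' - d2) ≤ |ψ (d' - d2)| := h3
        _ ≤ ‖ψ‖ * ‖d' - d2‖ := h3'
        _ ≤ ‖ψ‖ * (δ / (4 * (‖ψ‖ + 1))) := by rw [hd2]; exact h4
        _ ≤ δ / 4 := h5
      have h7 : ψ (d' - d2) = ψ d' - ψ d2 := map_sub ψ d' d2
      linarith
  choose step hstep1 hstep2 hstep3 hstep4 using hstep
  let Gs : ℕ → Finset Γ := fun k => Nat.recAux (∅ : Finset Γ) (fun _ G => (step G).1) k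
  let ds : ℕ → D := fun k => (step (Gs k)).2
  have hGsucc : ∀ k, Gs (k + 1) = (step (Gs k)).1 := fun k => rfl
  have hGmono : Monotone Gs := monotone_nat_of_le_succ (fun k => by
    rw [show Gs (k+1) = (step (Gs k)).1 from rfl]
    exact hstep1 (Gs k))
  have hdn : ∀ k, ‖ds k‖ ≤ 1 := fun k => hstep2 _
  have hsupp : ∀ k γ, S.ι (ds k) γ ≠ 0 → γ ∈ Gs (k + 1) ∧ γ ∉ Gs k := fun k γ h => by
    rw [hGsucc]
    exact hstep3 _ γ h
  have hψk : ∀ k, δ / 4 ≤ ψ (ds k) := fun k => hstep4 _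
  have hdisj : ∀ {k l : ℕ}, k < l → ∀ γ, S.ι (ds k) γ ≠ 0 → S.ι (ds l) γ = 0 := by
    intro k l hkl γ hk
    by_contra hl
    have h1 := (hsupp k γ hk).1
    have h2 := (hsupp l γ hl).2
    exact h2 (hGmono (by omega : k + 1 ≤ l) h1)
  set u : ℕ → E := fun k => ∑' γ, ‖S.ι (ds k) γ‖ • S.e γ with hu
  have hun : ∀ k, ‖u k‖ ≤ 1 := fun k => by
    rw [hu, ← S.hnormD (ds k)]
    exact hdn k
  have hucoeff : ∀ k, coeff S.hbasis (u k) = fun γ => ‖S.ι (ds k) γ‖ := fun k =>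
    (coeff_unique S.hbasis (S.hmem (ds k)).hasSum).symm
  -- the ℓ¹ lower bound for the blocks u k
  have hl1 : ∀ (N : ℕ) (t : ℕ → ℝ),
      (δ / 4) * (∑ k ∈ Finset.range N, |t k|) ≤ ‖ψ‖ * ‖∑ k ∈ Finset.range N, t k • u k‖ := by
    intro N t
    set dd : D := ∑ k ∈ Finset.range N, |t k| • ds k with hdd
    have hψdd : (δ / 4) * (∑ k ∈ Finset.range N, |t k|) ≤ ψ dd := by
      rw [hdd, map_sum, Finset.mul_sum]
      refine Finset.sum_le_sum fun k _ => ?_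
      rw [map_smul, smul_eq_mul]
      have := hψk k
      nlinarith [abs_nonneg (t k)]
    have hcoord : ∀ γ, ‖S.ι dd γ‖ = ∑ k ∈ Finset.range N, |t k| * ‖S.ι (ds k) γ‖ := by
      intro γ
      have hιdd : S.ι dd γ = ∑ k ∈ Finset.range N, |t k| • S.ι (ds k) γ := by
        rw [hdd, map_sum, Finset.sum_apply]
        exact Finset.sum_congr rfl fun k _ => by rw [map_smul]; rfl
      by_cases hex : ∃ k ∈ Finset.range N, S.ι (ds k) γ ≠ 0
      · obtain ⟨k0, hk0mem, hk0⟩ := hex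
        have hzero : ∀ k ∈ Finset.range N, k ≠ k0 → S.ι (ds k) γ = 0 := by
          intro k _ hne
          rcases lt_or_gt_of_ne hne with h | h
          · by_contra hz
            exact hk0 (hdisj h γ hz)
          · exact hdisj h γ hk0
        have h1 : S.ι dd γ = |t k0| • S.ι (ds k0) γ := by
          rw [hιdd]
          refine Finset.sum_eq_single_of_mem k0 hk0mem fun k hk hne => ?_
          rw [hzero k hk hne, smul_zero]
        have h2 : ∑ k ∈ Finset.range N, |t k| * ‖S.ι (ds k) γ‖ = |t k0| * ‖S.ι (ds k0) γ‖ := by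
          refine Finset.sum_eq_single_of_mem k0 hk0mem fun k hk hne => ?_
          rw [hzero k hk hne, norm_zero, mul_zero]
        rw [h1, h2, norm_smul, Real.norm_eq_abs, abs_abs]
      · push_neg at hex
        have h1 : S.ι dd γ = 0 := by
          rw [hιdd]
          exact Finset.sum_eq_zero fun k hk => by rw [hex k hk, smul_zero]
        rw [h1, norm_zero]
        symm
        exact Finset.sum_eq_zero fun k hk => by rw [hex k hk, norm_zero, mul_zero]
    have hndd : ‖dd‖ = ‖∑ k ∈ Finset.range N, |t k| • u k‖ := by
      rw [S.hnormD dd]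
      congr 1
      have heq : (fun γ => ‖S.ι dd γ‖ • S.e γ)
          = fun γ => ∑ k ∈ Finset.range N, |t k| • (‖S.ι (ds k) γ‖ • S.e γ) := by
        funext γ
        rw [hcoord γ, Finset.sum_smul]
        exact Finset.sum_congr rfl fun k _ => by rw [mul_smul]
      rw [heq, Summable.tsum_finsetSum (fun k _ => (S.hmem (ds k)).const_smul (|t k|))]
      refine Finset.sum_congr rfl fun k _ => ?_
      rw [Summable.tsum_const_smul _ (S.hmem (ds k))]
    have hufin : ∀ k < N, u k = ∑ γ ∈ Gs N, ‖S.ι (ds k) γ‖ • S.e γ := by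
      intro k hk
      rw [hu]
      refine tsum_eq_sum fun γ hγ => ?_
      by_cases hz : S.ι (ds k) γ = 0
      · rw [hz, norm_zero, zero_smul]
      · exact absurd (hGmono (show k + 1 ≤ N by omega) (hsupp k γ hz).1) hγ
    set A : Γ → ℝ := fun γ => ∑ k ∈ Finset.range N, t k * ‖S.ι (ds k) γ‖ with hA
    have hswap : ∀ t' : ℕ → ℝ, ∑ k ∈ Finset.range N, t' k • u k
        = ∑ γ ∈ Gs N, (∑ k ∈ Finset.range N, t' k * ‖S.ι (ds k) γ‖) • S.e γ := by
      intro t'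
      calc ∑ k ∈ Finset.range N, t' k • u k
          = ∑ k ∈ Finset.range N, ∑ γ ∈ Gs N, (t' k * ‖S.ι (ds k) γ‖) • S.e γ := by
            refine Finset.sum_congr rfl fun k hk => ?_
            rw [hufin k (Finset.mem_range.mp hk), Finset.smul_sum]
            exact Finset.sum_congr rfl fun γ _ => by rw [smul_smul]
        _ = ∑ γ ∈ Gs N, (∑ k ∈ Finset.range N, t' k * ‖S.ι (ds k) γ‖) • S.e γ := by
            rw [Finset.sum_comm]
            exact Finset.sum_congr rfl fun γ _ => by rw [Finset.sum_smul]
    have habsA : ∀ γ, |A γ| = ∑ k ∈ Finset.range N, |t k| * ‖S.ι (ds k) γ‖ := by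
      intro γ
      by_cases hex : ∃ k ∈ Finset.range N, S.ι (ds k) γ ≠ 0
      · obtain ⟨k0, hk0mem, hk0⟩ := hex
        have hzero : ∀ k ∈ Finset.range N, k ≠ k0 → S.ι (ds k) γ = 0 := by
          intro k _ hne
          rcases lt_or_gt_of_ne hne with h | h
          · by_contra hz
            exact hk0 (hdisj h γ hz)
          · exact hdisj h γ hk0
        have h1 : A γ = t k0 * ‖S.ι (ds k0) γ‖ := by
          rw [hA]
          refine Finset.sum_eq_single_of_mem k0 hk0mem fun k hk hne => ?_
          rw [hzero k hk hne, norm_zero, mul_zero]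
        have h2 : ∑ k ∈ Finset.range N, |t k| * ‖S.ι (ds k) γ‖ = |t k0| * ‖S.ι (ds k0) γ‖ := by
          refine Finset.sum_eq_single_of_mem k0 hk0mem fun k hk hne => ?_
          rw [hzero k hk hne, norm_zero, mul_zero]
        rw [h1, h2, abs_mul, abs_of_nonneg (norm_nonneg _)]
      · push_neg at hex
        have h1 : A γ = 0 := by
          rw [hA]
          exact Finset.sum_eq_zero fun k hk => by rw [hex k hk, norm_zero, mul_zero]
        rw [h1, abs_zero]
        symm
        exact Finset.sum_eq_zero fun k hk => by rw [hex k hk, norm_zero, mul_zero]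
    have hsum_abs : ∑ k ∈ Finset.range N, |t k| • u k = ∑ γ ∈ Gs N, |A γ| • S.e γ := by
      rw [hswap (fun k => |t k|)]
      exact Finset.sum_congr rfl fun γ _ => by rw [habsA γ]
    have hsum_t : ∑ k ∈ Finset.range N, t k • u k = ∑ γ ∈ Gs N, A γ • S.e γ := hswap t
    have hflip : ‖∑ γ ∈ Gs N, |A γ| • S.e γ‖ = ‖∑ γ ∈ Gs N, A γ • S.e γ‖ := by
      set sg : Γ → ℝ := fun γ => if A γ < 0 then -1 else 1 with hsg
      have h1 : ∑ γ ∈ Gs N, |A γ| • S.e γ = ∑ γ ∈ Gs N, (sg γ * A γ) • S.e γ := by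
        refine Finset.sum_congr rfl fun γ _ => ?_
        congr 1
        simp only [hsg]
        by_cases hneg : A γ < 0
        · rw [if_pos hneg, abs_of_neg hneg]; ring
        · rw [if_neg hneg, abs_of_nonneg (not_lt.mp hneg)]; ring
      rw [h1]
      exact norm_flip_sum S.hunc A sg (Gs N)
        (fun γ _ => by simp only [hsg]; by_cases hneg : A γ < 0 <;> simp [hneg])
    have hψdd2 : ψ dd ≤ ‖ψ‖ * ‖dd‖ :=
      calc ψ dd ≤ |ψ dd| := le_abs_self _
      _ ≤ ‖ψ‖ * ‖dd‖ := by rw [← Real.norm_eq_abs]; exact ψ.le_opNorm dd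
    rw [hndd, hsum_abs, hflip, ← hsum_t] at hψdd2
    linarith
  -- linear independence of the blocks
  have hli : LinearIndependent ℝ u := by
    rw [linearIndependent_iff']
    intro s g hzero i hi
    set N : ℕ := s.sup id + 1 with hN
    have hsub : s ⊆ Finset.range N := fun k hk => Finset.mem_range.mpr (by
      have := Finset.le_sup (f := id) hk
      simp only [id] at this
      omega)
    set t : ℕ → ℝ := fun k => if k ∈ s then g k else 0 with ht
    have hzero2 : ∑ k ∈ Finset.range N, t k • u k = 0 := by
      have h1 : ∑ k ∈ Finset.range N, t k • u k = ∑ k ∈ s, t k • u k :=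
        (Finset.sum_subset hsub (fun k _ hk => by rw [ht]; simp only [if_neg hk, zero_smul])).symm
      rw [h1, ← hzero]
      exact Finset.sum_congr rfl fun k hk => by rw [ht]; simp only [if_pos hk]
    have h := hl1 N t
    rw [hzero2, norm_zero, mul_zero] at h
    have hnonneg : ∀ k ∈ Finset.range N, 0 ≤ |t k| := fun k _ => abs_nonneg _
    have hsum0 : ∑ k ∈ Finset.range N, |t k| = 0 := by
      have hge := Finset.sum_nonneg hnonneg
      nlinarith
    have hall := (Finset.sum_eq_zero_iff_of_nonneg hnonneg).mp hsum0
    have hti := hall i (hsub hi)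
    rw [ht] at hti
    simp only [if_pos hi] at hti
    exact abs_eq_zero.mp hti
  -- build the summing functional on the span of the blocks
  set W : Submodule ℝ E := Submodule.span ℝ (Set.range u) with hW
  set Bs : Module.Basis ℕ ℝ W := Module.Basis.span hli with hBs
  have hBsu : ∀ k, (Bs k : E) = u k := fun k => congrArg Subtype.val (Module.Basis.span_apply hli k)
  set η₀ : W →ₗ[ℝ] ℝ := Module.Basis.constr Bs ℝ (fun _ => (1 : ℝ)) with hη₀
  have hη₀u : ∀ k, η₀ (Bs k) = 1 := fun k => Module.Basis.constr_basis Bs ℝ _ k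
  have hη₀bound : ∀ z : W, ‖η₀ z‖ ≤ (4 * ‖ψ‖ / δ) * ‖z‖ := by
    intro z
    set r := Bs.repr z with hr
    have hzrep : (z : E) = ∑ k ∈ r.support, r k • u k := by
      conv_lhs => rw [← Bs.linearCombination_repr z]
      rw [Finsupp.linearCombination_apply, Finsupp.sum]
      rw [show ((∑ k ∈ r.support, r k • Bs k : W) : E) = ∑ k ∈ r.support, ((r k • Bs k : W) : E)
        from by exact_mod_cast rfl]
      exact Finset.sum_congr rfl fun k _ => by rw [Submodule.coe_smul, hBsu k]
    set N : ℕ := r.support.sup id + 1 with hN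
    have hsub : r.support ⊆ Finset.range N := fun k hk => Finset.mem_range.mpr (by
      have := Finset.le_sup (f := id) hk
      simp only [id] at this
      omega)
    set t : ℕ → ℝ := fun k => if k ∈ r.support then r k else 0 with ht
    have hteq : ∑ k ∈ Finset.range N, t k • u k = (z : E) := by
      have h1 : ∑ k ∈ Finset.range N, t k • u k = ∑ k ∈ r.support, t k • u k :=
        (Finset.sum_subset hsub (fun k _ hk => by rw [ht]; simp only [if_neg hk, zero_smul])).symm
      rw [h1, hzrep]
      exact Finset.sum_congr rfl fun k hk => by rw [ht]; simp only [if_pos hk]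
    have hη₀z : η₀ z = ∑ k ∈ r.support, r k := by
      rw [hη₀, Module.Basis.constr_apply, Finsupp.sum]
      exact Finset.sum_congr rfl fun k _ => by rw [smul_eq_mul, mul_one]
    have h5 : ∑ k ∈ r.support, |r k| = ∑ k ∈ Finset.range N, |t k| := by
      rw [show ∑ k ∈ r.support, |r k| = ∑ k ∈ r.support, |t k| from
        Finset.sum_congr rfl fun k hk => by rw [ht]; simp only [if_pos hk]]
      exact Finset.sum_subset hsub (fun k _ hk => by rw [ht]; simp only [if_neg hk, abs_zero])
    have h4 : |η₀ z| ≤ ∑ k ∈ Finset.range N, |t k| := by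
      rw [hη₀z, ← h5]
      exact Finset.abs_sum_le_sum_abs _ _
    have h6 := hl1 N t
    rw [hteq] at h6
    have h7 : ‖(z : E)‖ = ‖z‖ := rfl
    rw [h7] at h6
    rw [Real.norm_eq_abs]
    have h8 : δ * ((4 * ‖ψ‖ / δ) * ‖z‖) = 4 * (‖ψ‖ * ‖z‖) := by
      field_simp
    have h9 : δ * |η₀ z| ≤ δ * ∑ k ∈ Finset.range N, |t k| :=
      mul_le_mul_of_nonneg_left h4 hδ.le
    have h10 : δ * ∑ k ∈ Finset.range N, |t k| ≤ 4 * (‖ψ‖ * ‖z‖) := by nlinarith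
    have h11 : δ * |η₀ z| ≤ δ * ((4 * ‖ψ‖ / δ) * ‖z‖) := by rw [h8]; linarith
    exact le_of_mul_le_mul_left h11 hδ
  set ηc : W →L[ℝ] ℝ := LinearMap.mkContinuous η₀ (4 * ‖ψ‖ / δ) hη₀bound with hηc
  obtain ⟨ξ, hξext, -⟩ := exists_extension_norm_eq W ηc
  have hξu : ∀ k, ξ (u k) = 1 := by
    intro k
    have hmem : u k ∈ W := Submodule.subset_span (Set.mem_range_self k)
    have h1 : ξ (u k) = ηc ⟨u k, hmem⟩ := hξext ⟨u k, hmem⟩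
    have h2 : ηc ⟨u k, hmem⟩ = η₀ ⟨u k, hmem⟩ := rfl
    have h3 : (⟨u k, hmem⟩ : W) = Bs k := Subtype.ext (by rw [hBsu k])
    rw [h1, h2, h3, hη₀u k]
  -- Banach-Alaoglu and a weak-star cluster point
  set Φs : ℕ → WeakDual ℝ (StrongDual ℝ E) :=
    fun k => (inclusionInDoubleDual ℝ E (u k) : WeakDual ℝ (StrongDual ℝ E)) with hΦs
  have hΦmem : ∀ k, Φs k ∈ (WeakDual.toStrongDual (𝕜 := ℝ) (E := StrongDual ℝ E)) ⁻¹'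
      Metric.closedBall 0 1 := by
    intro k
    simp only [Set.mem_preimage, Metric.mem_closedBall, dist_zero_right]
    calc dist (WeakDual.toStrongDual (Φs k)) 0 = ‖WeakDual.toStrongDual (Φs k)‖ := dist_zero_right (WeakDual.toStrongDual (Φs k))
    _ ≤ ‖u k‖ := double_dual_bound ℝ E (u k)
    _ ≤ 1 := hun k
  have hK := WeakDual.isCompact_closedBall (𝕜 := ℝ) (E := StrongDual ℝ E) 0 1
  have hle : Filter.map Φs atTop ≤
      Filter.principal ((WeakDual.toStrongDual (𝕜 := ℝ) (E := StrongDual ℝ E)) ⁻¹'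
        Metric.closedBall 0 1) := by
    rw [Filter.le_principal_iff, Filter.mem_map]
    exact Filter.Eventually.of_forall hΦmem
  obtain ⟨Φ, hΦmem', hΦcl⟩ := hK.exists_clusterPt hle
  have hcl : ∀ ζ : StrongDual ℝ E, ClusterPt (Φ ζ) (Filter.map (fun k => ζ (u k)) atTop) := by
    intro ζ
    have hcont : Continuous (fun Ψ : WeakDual ℝ (StrongDual ℝ E) => Ψ ζ) :=
      WeakDual.eval_continuous ζ
    have h1 := hΦcl.map hcont.continuousAt Filter.tendsto_map
    rw [Filter.map_map] at h1
    exact h1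
  have hΦξ : Φ ξ = 1 := by
    have h1 := hcl ξ
    have h2 : (fun k => ξ (u k)) = fun _ : ℕ => (1 : ℝ) := funext hξu
    rw [h2, Filter.map_const] at h1
    have h4 : Φ ξ ∈ closure ({1} : Set ℝ) := by
      rw [mem_closure_iff_clusterPt, Filter.principal_singleton]
      exact h1
    rwa [closure_singleton, Set.mem_singleton_iff] at h4
  have hΦcoeff : ∀ γ, Φ (coeffCLM S.hbasis S.hnorm S.hunc γ) = 0 := by
    intro γ
    have h1 := hcl (coeffCLM S.hbasis S.hnorm S.hunc γ)
    have hvals : ∀ k, coeffCLM S.hbasis S.hnorm S.hunc γ (u k) = ‖S.ι (ds k) γ‖ := by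
      intro k
      rw [coeffCLM_apply, hucoeff k]
    have hev : ∀ᶠ k in atTop, coeffCLM S.hbasis S.hnorm S.hunc γ (u k) = 0 := by
      by_cases hex : ∃ k0, S.ι (ds k0) γ ≠ 0
      · obtain ⟨k0, hk0⟩ := hex
        refine eventually_atTop.mpr ⟨k0 + 1, fun k hk => ?_⟩
        rw [hvals k, hdisj (show k0 < k by omega) γ hk0, norm_zero]
      · push_neg at hex
        exact Eventually.of_forall fun k => by rw [hvals k, hex k, norm_zero]
    have hT : Tendsto (fun k => coeffCLM S.hbasis S.hnorm S.hunc γ (u k)) atTop (𝓝 0) :=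
      Tendsto.congr' (EventuallyEq.symm hev) tendsto_const_nhds
    have h5 : ClusterPt (Φ (coeffCLM S.hbasis S.hnorm S.hunc γ)) (𝓝 (0 : ℝ)) :=
      h1.mono hT
    exact eq_of_nhds_neBot h5
  obtain ⟨v, hv⟩ := hrefl (WeakDual.toStrongDual Φ)
  have hv1 : ∀ ζ : StrongDual ℝ E, ζ v = Φ ζ := by
    intro ζ
    have h1 : inclusionInDoubleDual ℝ E v ζ = WeakDual.toStrongDual Φ ζ := by rw [hv]
    rw [dual_def] at h1
    exact h1
  have hc0 : ∀ γ, coeff S.hbasis v γ = 0 := by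
    intro γ
    have h1 := hv1 (coeffCLM S.hbasis S.hnorm S.hunc γ)
    rw [coeffCLM_apply] at h1
    rw [h1, hΦcoeff γ]
  have hv0 : v = 0 := eq_zero_of_coeff_zero S.hbasis v hc0
  have hcontra : (1 : ℝ) = 0 := by
    rw [← hΦξ, ← hv1 ξ, hv0, map_zero]
  norm_num at hcontra

end SumStr

end GrothAux

namespace GrothAux
open scoped Classical
open Filter Topology NormedSpace
set_option linter.unusedSectionVars false
set_option maxHeartbeats 1600000

variable {Γ : Type*} {E : Type*} [NormedAddCommGroup E] [NormedSpace ℝ E]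
  {X : Γ → Type*} [∀ γ, NormedAddCommGroup (X γ)] [∀ γ, NormedSpace ℝ (X γ)]
  {D : Type*} [NormedAddCommGroup D] [NormedSpace ℝ D]

namespace SumStr

variable (S : SumStr Γ E X D)

include S

/-- Step (iii): evaluating a functional on a finitely supported restriction. -/
theorem phi_comp_PFc (φ : (D →L[ℝ] ℝ) →L[ℝ] ℝ) (ψ : D →L[ℝ] ℝ) (F : Finset Γ) :
    φ (ψ.comp (S.PFc F)) = ∑ γ ∈ F, (φ.comp (S.Rc γ)) (ψ.comp (S.Jc γ)) := by
  have h1 : ψ.comp (S.PFc F) = ∑ γ ∈ F, (ψ.comp (S.Jc γ)).comp (S.Pc γ) := by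
    ext d
    rw [ContinuousLinearMap.comp_apply, PFc, ContinuousLinearMap.sum_apply, map_sum,
      ContinuousLinearMap.sum_apply]
    rfl
  rw [h1, map_sum]
  exact Finset.sum_congr rfl fun γ _ => rfl

/-- Step (iv): the tail estimate. -/
theorem tail_bound (φ : (D →L[ℝ] ℝ) →L[ℝ] ℝ) (ψ : D →L[ℝ] ℝ)
    (hsc : Summable fun γ => ‖φ.comp (S.Rc γ)‖ • S.e γ)
    {F G : Finset Γ} (hFG : F ⊆ G) :
    |φ (ψ.comp (S.PFc G)) - φ (ψ.comp (S.PFc F))|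
      ≤ ‖ψ‖ * ‖(∑' γ, ‖φ.comp (S.Rc γ)‖ • S.e γ) - ∑ γ ∈ F, ‖φ.comp (S.Rc γ)‖ • S.e γ‖ := by
  classical
  rw [S.phi_comp_PFc φ ψ G, S.phi_comp_PFc φ ψ F, ← Finset.sum_sdiff_eq_sub hFG]
  calc |∑ γ ∈ G \ F, (φ.comp (S.Rc γ)) (ψ.comp (S.Jc γ))|
      ≤ ∑ γ ∈ G \ F, ‖φ.comp (S.Rc γ)‖ * ‖ψ.comp (S.Jc γ)‖ := by
        refine (Finset.abs_sum_le_sum_abs _ _).trans (Finset.sum_le_sum fun γ _ => ?_)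
        rw [← Real.norm_eq_abs]
        exact (φ.comp (S.Rc γ)).le_opNorm _
    _ ≤ ‖ψ‖ * ‖∑ γ ∈ G \ F, ‖φ.comp (S.Rc γ)‖ • S.e γ‖ :=
        S.pairing (fun γ => ‖φ.comp (S.Rc γ)‖) (fun γ => norm_nonneg (φ.comp (S.Rc γ)))
          ψ (G \ F)
    _ ≤ ‖ψ‖ * ‖(∑' γ, ‖φ.comp (S.Rc γ)‖ • S.e γ) - ∑ γ ∈ F, ‖φ.comp (S.Rc γ)‖ • S.e γ‖ := by
        refine mul_le_mul_of_nonneg_left ?_ (norm_nonneg ψ)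
        have hmask := hasSum_masked S.hunc _ hsc.hasSum F
        have h1 := norm_partial_le S.hunc _ hmask (G \ F)
        have h2 : ∑ γ ∈ G \ F, (if γ ∈ F then 0 else ‖φ.comp (S.Rc γ)‖) • S.e γ
            = ∑ γ ∈ G \ F, ‖φ.comp (S.Rc γ)‖ • S.e γ :=
          Finset.sum_congr rfl fun γ hγ => by
            rw [if_neg (Finset.mem_sdiff.mp hγ).2]
        rwa [h2] at h1

/-- Monotonicity of shrinking remainders. -/
theorem norm_sub_comp_anti (ψ : D →L[ℝ] ℝ) {F G : Finset Γ} (hFG : F ⊆ G) :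
    ‖ψ - ψ.comp (S.PFc G)‖ ≤ ‖ψ - ψ.comp (S.PFc F)‖ := by
  refine ContinuousLinearMap.opNorm_le_bound _ (norm_nonneg _) fun d => ?_
  have h1 : (ψ - ψ.comp (S.PFc G)) d = (ψ - ψ.comp (S.PFc F)) (d - S.PFc G d) := by
    rw [S.sub_comp_PFc_apply, S.sub_comp_PFc_apply, S.PFc_sub_eq_zero hFG d, sub_zero]
  rw [h1]
  calc ‖(ψ - ψ.comp (S.PFc F)) (d - S.PFc G d)‖
      ≤ ‖ψ - ψ.comp (S.PFc F)‖ * ‖d - S.PFc G d‖ :=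
        (ψ - ψ.comp (S.PFc F)).le_opNorm _
    _ ≤ ‖ψ - ψ.comp (S.PFc F)‖ * ‖d‖ :=
        mul_le_mul_of_nonneg_left (S.norm_sub_PFc_le G d) (norm_nonneg _)

/-- Step (v): the limiting tail estimate. -/
theorem tail_bound_limit (hrefl : Function.Surjective (inclusionInDoubleDual ℝ E))
    (φ : (D →L[ℝ] ℝ) →L[ℝ] ℝ) (ψ : D →L[ℝ] ℝ) (F : Finset Γ) :
    |φ ψ - φ (ψ.comp (S.PFc F))|
      ≤ ‖ψ‖ * ‖(∑' γ, ‖φ.comp (S.Rc γ)‖ • S.e γ) - ∑ γ ∈ F, ‖φ.comp (S.Rc γ)‖ • S.e γ‖ := by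
  have hsc := S.summable_c hrefl φ
  have key : ∀ ε > (0 : ℝ), ∀ᶠ G in (atTop : Filter (Finset Γ)), ‖ψ - ψ.comp (S.PFc G)‖ < ε := by
    intro ε hε
    obtain ⟨F₀, hF₀⟩ := S.shrink hrefl ψ hε
    exact eventually_atTop.mpr ⟨F₀, fun G hG => lt_of_le_of_lt (S.norm_sub_comp_anti ψ hG) hF₀⟩
  have hz : Tendsto (fun G : Finset Γ => ‖ψ - ψ.comp (S.PFc G)‖) atTop (𝓝 0) := by
    refine Metric.tendsto_nhds.mpr fun ε hε => ?_
    filter_upwards [key ε hε] with G hG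
    rw [Real.dist_eq, sub_zero, abs_of_nonneg (norm_nonneg _)]
    exact hG
  have h2 : Tendsto (fun G : Finset Γ => φ ψ - φ (ψ.comp (S.PFc G))) atTop (𝓝 0) := by
    have hb : ∀ G : Finset Γ, ‖φ ψ - φ (ψ.comp (S.PFc G))‖ ≤ ‖φ‖ * ‖ψ - ψ.comp (S.PFc G)‖ := by
      intro G
      rw [← map_sub]
      exact φ.le_opNorm _
    refine squeeze_zero_norm hb ?_
    have := hz.const_mul ‖φ‖
    simpa using this
  have hT : Tendsto (fun G : Finset Γ => φ (ψ.comp (S.PFc G))) atTop (𝓝 (φ ψ)) := by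
    have h3 := (tendsto_const_nhds (x := φ ψ) (f := (atTop : Filter (Finset Γ)))).sub h2
    simpa using h3
  have hT2 : Tendsto (fun G : Finset Γ => |φ (ψ.comp (S.PFc G)) - φ (ψ.comp (S.PFc F))|)
      atTop (𝓝 (|φ ψ - φ (ψ.comp (S.PFc F))|)) :=
    (hT.sub tendsto_const_nhds).abs
  refine le_of_tendsto hT2 ?_
  exact eventually_atTop.mpr ⟨F, fun G hG => S.tail_bound φ ψ hsc hG⟩

/-- The core of the backward direction. -/
theorem weakconv_core [CompleteSpace D]
    (hrefl : Function.Surjective (inclusionInDoubleDual ℝ E))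
    (hG : ∀ γ, IsGrothendieck (X γ))
    (h : ℕ → D →L[ℝ] ℝ) (hw : ∀ d, Tendsto (fun n => h n d) atTop (𝓝 0))
    (φ : (D →L[ℝ] ℝ) →L[ℝ] ℝ) : Tendsto (fun n => φ (h n)) atTop (𝓝 0) := by
  classical
  have hbdd : ∀ d : D, ∃ C, ∀ n, ‖h n d‖ ≤ C := by
    intro d
    obtain ⟨C, hC⟩ := ((hw d).norm.bddAbove_range)
    exact ⟨C, fun n => by simpa using hC (Set.mem_range_self n)⟩
  obtain ⟨M, hM⟩ := banach_steinhaus hbdd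
  have hsc := S.summable_c hrefl φ
  set v : E := ∑' γ, ‖φ.comp (S.Rc γ)‖ • S.e γ with hv
  have hvs : HasSum (fun γ => ‖φ.comp (S.Rc γ)‖ • S.e γ) v := hsc.hasSum
  have hcoord : ∀ γ, Tendsto (fun n => (φ.comp (S.Rc γ)) ((h n).comp (S.Jc γ)))
      atTop (𝓝 0) := by
    intro γ
    have hwstar : WeakStarConv (X γ) (fun n => (h n).comp (S.Jc γ)) 0 := by
      intro x
      have := hw (S.Jc γ x)
      simpa using this
    have hwc := hG γ _ _ hwstar
    have h1 := hwc (φ.comp (S.Rc γ))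
    simpa using h1
  rw [NormedAddCommGroup.tendsto_nhds_zero]
  intro ε hε
  have hMn : (0 : ℝ) ≤ M := le_trans (norm_nonneg (h 0)) (hM 0)
  have htail : Tendsto (fun F : Finset Γ => ‖v - ∑ γ ∈ F, ‖φ.comp (S.Rc γ)‖ • S.e γ‖)
      atTop (𝓝 0) := by
    have h3 := ((tendsto_const_nhds (x := v) (f := (atTop : Filter (Finset Γ)))).sub hvs).norm
    simpa using h3
  obtain ⟨F, hF⟩ := (htail.eventually_lt_const (show (0:ℝ) < ε / (2 * (M + 1)) by positivity)).exists
  have hub : ∀ n, |φ (h n) - φ ((h n).comp (S.PFc F))| ≤ ε / 2 := by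
    intro n
    have h1 := S.tail_bound_limit hrefl φ (h n) F
    have h2 : ‖h n‖ * ‖v - ∑ γ ∈ F, ‖φ.comp (S.Rc γ)‖ • S.e γ‖
        ≤ M * (ε / (2 * (M + 1))) := by
      have := hM n
      have h4 := norm_nonneg (h n)
      have h5 := norm_nonneg (v - ∑ γ ∈ F, ‖φ.comp (S.Rc γ)‖ • S.e γ)
      nlinarith [hF]
    have h3 : M * (ε / (2 * (M + 1))) ≤ ε / 2 := by
      have hx : M / (M + 1) ≤ 1 := by
        rw [div_le_one (by positivity)]; linarith
      have heq : M * (ε / (2 * (M + 1))) = (ε / 2) * (M / (M + 1)) := by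
        field_simp
      rw [heq]
      nlinarith
    calc |φ (h n) - φ ((h n).comp (S.PFc F))|
        ≤ ‖h n‖ * ‖v - ∑ γ ∈ F, ‖φ.comp (S.Rc γ)‖ • S.e γ‖ := h1
      _ ≤ M * (ε / (2 * (M + 1))) := h2
      _ ≤ ε / 2 := h3
  have hfin : Tendsto (fun n => φ ((h n).comp (S.PFc F))) atTop (𝓝 0) := by
    have heq : (fun n => φ ((h n).comp (S.PFc F)))
        = fun n => ∑ γ ∈ F, (φ.comp (S.Rc γ)) ((h n).comp (S.Jc γ)) :=
      funext fun n => S.phi_comp_PFc φ (h n) F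
    rw [heq]
    have h4 := tendsto_finset_sum F (fun γ (_ : γ ∈ F) => hcoord γ)
    simpa using h4
  have hevfin := (NormedAddCommGroup.tendsto_nhds_zero.mp hfin) (ε / 2) (by positivity)
  filter_upwards [hevfin] with n hn
  have h6 := hub n
  rw [Real.norm_eq_abs] at hn ⊢
  calc |φ (h n)| = |(φ (h n) - φ ((h n).comp (S.PFc F))) + φ ((h n).comp (S.PFc F))| := by
        ring_nf
    _ ≤ |φ (h n) - φ ((h n).comp (S.PFc F))| + |φ ((h n).comp (S.PFc F))| := abs_add_le _ _
    _ < ε / 2 + ε / 2 := by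
        have := hub n
        linarith
    _ = ε := by ring

/-- The forward direction: each coordinate inherits the Grothendieck property. -/
theorem grothendieck_coord (hD : IsGrothendieck D) (γ : Γ) : IsGrothendieck (X γ) := by
  intro f g hws φ
  have hws' : WeakStarConv D (fun n => (f n).comp (S.Pc γ)) (g.comp (S.Pc γ)) := by
    intro d
    exact hws (S.ι d γ)
  have hwc := hD _ _ hws'
  have hφ := hwc (φ.comp (S.Qc γ))
  have heq : ∀ k : X γ →L[ℝ] ℝ, (φ.comp (S.Qc γ)) (k.comp (S.Pc γ)) = φ k := by
    intro k
    have h1 : (k.comp (S.Pc γ)).comp (S.Jc γ) = k := by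
      ext x
      rw [ContinuousLinearMap.comp_apply, ContinuousLinearMap.comp_apply, S.Pc_Jc γ x]
    calc (φ.comp (S.Qc γ)) (k.comp (S.Pc γ))
        = φ (((k.comp (S.Pc γ))).comp (S.Jc γ)) := rfl
      _ = φ k := by rw [h1]
  have h2 : (fun n => (φ.comp (S.Qc γ)) ((f n).comp (S.Pc γ))) = fun n => φ (f n) :=
    funext fun n => heq (f n)
  rw [h2, heq g] at hφ
  exact hφ

/-- The backward direction. -/
theorem grothendieck_D [CompleteSpace D]
    (hrefl : Function.Surjective (inclusionInDoubleDual ℝ E))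
    (hG : ∀ γ, IsGrothendieck (X γ)) : IsGrothendieck D := by
  intro f g hws φ
  set h : ℕ → D →L[ℝ] ℝ := fun n => f n - g with hh
  have hw : ∀ d, Tendsto (fun n => h n d) atTop (𝓝 0) := by
    intro d
    have h1 := (hws d).sub (tendsto_const_nhds (x := g d))
    simpa [hh] using h1
  have hmain := S.weakconv_core hrefl hG h hw φ
  have heq : (fun n => φ (f n)) = fun n => φ (h n) + φ g := funext fun n => by
    rw [hh]
    simp only [map_sub]
    ring
  rw [heq]
  have h2 := hmain.add (tendsto_const_nhds (x := φ g))
  simpa using h2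

end SumStr

end GrothAux

/-- Let `E` be a reflexive Banach space with a normalized 1-unconditional basis
`(e γ)`, let `(X γ)` be a family of Banach spaces, and let `D` be a Banach space
realizing the `E`-direct sum `(⊕ γ, X γ)_E`, i.e. `ι : D →ₗ (Π γ, X γ)` identifies `D`
with the tuples `(x γ)` such that `∑ γ, ‖x γ‖ • e γ` converges in `E`, with
`‖d‖ = ‖∑' γ, ‖ι d γ‖ • e γ‖`. Then `D` is Grothendieck iff each `X γ` is. -/
theorem grothendieck_Esum_iff (Γ : Type*) (E : Type*)
    [NormedAddCommGroup E] [NormedSpace ℝ E] [CompleteSpace E]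
    (e : Γ → E)
    -- `E` is reflexive
    (hrefl : Function.Surjective (NormedSpace.inclusionInDoubleDual ℝ E))
    -- `(e γ)` is normalized
    (hnorm : ∀ γ, ‖e γ‖ = 1)
    -- `(e γ)` is an (unconditional) basis: unique unconditional expansions
    (hbasis : ∀ v : E, ∃! a : Γ → ℝ, HasSum (fun γ => a γ • e γ) v)
    -- 1-unconditionality: changing signs of coefficients does not change the norm
    (hunc : ∀ (a ε : Γ → ℝ) (v w : E), (∀ γ, |ε γ| = 1) →
      HasSum (fun γ => a γ • e γ) v → HasSum (fun γ => (ε γ * a γ) • e γ) w → ‖w‖ = ‖v‖)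
    (X : Γ → Type*) [∀ γ, NormedAddCommGroup (X γ)] [∀ γ, NormedSpace ℝ (X γ)]
    [∀ γ, CompleteSpace (X γ)]
    (D : Type*) [NormedAddCommGroup D] [NormedSpace ℝ D] [CompleteSpace D]
    (ι : D →ₗ[ℝ] (∀ γ, X γ))
    (hinj : Function.Injective ι)
    (hmem : ∀ d : D, Summable fun γ => ‖ι d γ‖ • e γ)
    (hsurj : ∀ x : ∀ γ, X γ, (Summable fun γ => ‖x γ‖ • e γ) → ∃ d : D, ι d = x)
    (hnormD : ∀ d : D, ‖d‖ = ‖∑' γ, ‖ι d γ‖ • e γ‖) :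
    IsGrothendieck D ↔ ∀ γ, IsGrothendieck (X γ) := by
  have S : GrothAux.SumStr Γ E X D :=
    { e := e, ι := ι, hnorm := hnorm, hbasis := hbasis, hunc := hunc,
      hinj := hinj, hmem := hmem, hsurj := hsurj, hnormD := hnormD }
  constructor
  · intro hD γ
    exact S.grothendieck_coord hD γ
  · intro hG
    exact S.grothendieck_D hrefl hG
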